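/- Let s ≥ 1, r > 0, and for i = 2, …, s+1 let v_{i,1}, v_{i,2}, α̂_i ≥ 0 and α_{i,j} ≥ 0 (j = 1, …, i−1) satisfy the consistency condition v_{i,1} + v_{i,2} + α̂_i + Σ_{j=1}^{i−1} α_{i,j} = 1, and let abscissas satisfy 0 = c_1 ≤ c_2 ≤ ⋯ ≤ c_s ≤ c_{s+1} = 1 (non-decreasing). Suppose L satisfies the exponential monotonicity condition and N satisfies the forward-Euler condition with step bound h_FE > 0. Given u^{n−1}, u^n ∈ E and Δt with 0 ≤ Δt ≤ r h_FE, define the integrating factor two-step Runge–Kutta method: y_1 = u^n, and for i = 2, …, s+1, y_i = v_{i,1} • exp((c_i + 1) Δt • L) u^{n−1} + v_{i,2} • u^n + α̂_i • exp((c_i + 1) Δt • L)(u^{n−1} + (Δt/r) • N(u^{n−1})) + Σ_{j=1}^{i−1} α_{i,j} • exp((c_i − c_j) Δt • L)(y_j + (Δt/r) • N(y_j)), and u^{n+1} = y_{s+1}. Then f(u^{n+1}) ≤ max{ f(u^{n−1}), f(u^n) }. -/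

import Mathlib

lemma convex_combo_le' {E : Type*} [NormedAddCommGroup E] [NormedSpace ℝ E]
    (f : E → ℝ) (hf : ConvexOn ℝ Set.univ f) {ι : Type*} (t : Finset ι)
    (w : ι → ℝ) (z : ι → E) (hw : ∀ i ∈ t, 0 ≤ w i) (hw1 : ∑ i ∈ t, w i = 1)
    (M : ℝ) (hz : ∀ i ∈ t, f (z i) ≤ M) :
    f (∑ i ∈ t, w i • z i) ≤ M := by
  calc f (∑ i ∈ t, w i • z i) ≤ ∑ i ∈ t, w i * f (z i) :=
        hf.map_sum_le hw hw1 (fun i _ => Set.mem_univ _)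
    _ ≤ ∑ i ∈ t, w i * M :=
        Finset.sum_le_sum (fun i hi => mul_le_mul_of_nonneg_left (hz i hi) (hw i hi))
    _ = M := by rw [← Finset.sum_mul, hw1, one_mul]

lemma convex_combo_three_add' {E : Type*} [NormedAddCommGroup E] [NormedSpace ℝ E]
    (f : E → ℝ) (hf : ConvexOn ℝ Set.univ f) (a b g : E) (w1 w2 w3 : ℝ)
    (t : Finset ℕ) (w : ℕ → ℝ) (z : ℕ → E)
    (h1 : 0 ≤ w1) (h2 : 0 ≤ w2) (h3 : 0 ≤ w3) (hw : ∀ j ∈ t, 0 ≤ w j)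
    (hsum : w1 + w2 + w3 + ∑ j ∈ t, w j = 1)
    (M : ℝ) (ha : f a ≤ M) (hb : f b ≤ M) (hg : f g ≤ M)
    (hz : ∀ j ∈ t, f (z j) ≤ M) :
    f (w1 • a + w2 • b + w3 • g + ∑ j ∈ t, w j • z j) ≤ M := by
  have key := convex_combo_le' f hf ((Finset.univ : Finset (Fin 3)).disjSum t)
    (Sum.elim ![w1, w2, w3] w) (Sum.elim ![a, b, g] z)
    (by rintro (k | j) hk
        · fin_cases k <;> simpa using ‹_›
        · simp only [Finset.mem_disjSum] at hk
          simp only [Sum.elim_inr]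
          exact hw j (by rcases hk with ⟨_,_,h⟩|⟨j',hj',h⟩ <;> simp_all))
    (by rw [Finset.sum_disjSum]; simpa [Fin.sum_univ_three, add_assoc] using hsum)
    M
    (by rintro (k | j) hk
        · fin_cases k <;> simpa using ‹_›
        · simp only [Finset.mem_disjSum] at hk
          simp only [Sum.elim_inr]
          exact hz j (by rcases hk with ⟨_,_,h⟩|⟨j',hj',h⟩ <;> simp_all))
  rw [Finset.sum_disjSum] at key
  simpa [Fin.sum_univ_three, add_assoc] using key



/-- **SSP integrating factor two-step Runge–Kutta methods with non-decreasing
abscissas.**  If the explicit two-step Runge–Kutta method (coefficients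
`v₁ i, v₂ i, α̂ i, α i j ≥ 0` summing to one on each row, SSP coefficient `r > 0`)
has non-decreasing abscissas `0 = c 1 ≤ c 2 ≤ ⋯ ≤ c s ≤ c (s+1) = 1`,
`L` satisfies the exponential monotonicity condition, `N` satisfies the
forward-Euler condition with step bound `hFE > 0`, and `0 ≤ Δt ≤ r * hFE`,
then the integrating factor two-step Runge–Kutta update satisfies
`f uⁿ⁺¹ ≤ max (f uⁿ⁻¹) (f uⁿ)`. -/
theorem ssp_integratingFactor_twoStepRungeKutta
    {E : Type*} [NormedAddCommGroup E] [NormedSpace ℝ E] [FiniteDimensional ℝ E]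
    (f : E → ℝ) (hf_cont : Continuous f) (hf_conv : ConvexOn ℝ Set.univ f)
    (L : E →L[ℝ] E) (N : E → E)
    (hFE : ℝ) (hFE_pos : 0 < hFE)
    (hL : ∀ (τ : ℝ), 0 ≤ τ → ∀ u : E, f (NormedSpace.exp (τ • L) u) ≤ f u)
    (hN : ∀ u : E, ∀ τ : ℝ, 0 ≤ τ → τ ≤ hFE → f (u + τ • N u) ≤ f u)
    (s : ℕ) (hs : 1 ≤ s) (r : ℝ) (hr : 0 < r)
    (v1 v2 αhat : ℕ → ℝ) (α : ℕ → ℕ → ℝ)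
    (hv1 : ∀ i, 2 ≤ i → i ≤ s + 1 → 0 ≤ v1 i)
    (hv2 : ∀ i, 2 ≤ i → i ≤ s + 1 → 0 ≤ v2 i)
    (hαhat : ∀ i, 2 ≤ i → i ≤ s + 1 → 0 ≤ αhat i)
    (hα : ∀ i j, 2 ≤ i → i ≤ s + 1 → 1 ≤ j → j < i → 0 ≤ α i j)
    (hconsistency : ∀ i, 2 ≤ i → i ≤ s + 1 →
      v1 i + v2 i + αhat i + ∑ j ∈ Finset.Icc 1 (i - 1), α i j = 1)
    (c : ℕ → ℝ) (hc1 : c 1 = 0) (hcs1 : c (s + 1) = 1)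
    (hc_mono : ∀ j, 1 ≤ j → j ≤ s → c j ≤ c (j + 1))
    (uprev un : E) (Δt : ℝ) (hΔt_nonneg : 0 ≤ Δt) (hΔt : Δt ≤ r * hFE)
    (y : ℕ → E) (hy1 : y 1 = un)
    (hy : ∀ i, 2 ≤ i → i ≤ s + 1 →
      y i = v1 i • NormedSpace.exp (((c i + 1) * Δt) • L) uprev
          + v2 i • un
          + αhat i • NormedSpace.exp (((c i + 1) * Δt) • L)
              (uprev + (Δt / r) • N uprev)
          + ∑ j ∈ Finset.Icc 1 (i - 1), α i j •
              NormedSpace.exp (((c i - c j) * Δt) • L)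
                (y j + (Δt / r) • N (y j))) :
    f (y (s + 1)) ≤ max (f uprev) (f un) := by
  set M := max (f uprev) (f un) with hM
  -- monotonicity of c on [1, s+1]
  have hc_mono' : ∀ j k, 1 ≤ j → j ≤ k → k ≤ s + 1 → c j ≤ c k := by
    intro j k hj hjk hk
    induction k with
    | zero => omega
    | succ n ih =>
      rcases Nat.eq_or_lt_of_le hjk with h | h
      · rw [h]
      · have hjn : j ≤ n := by omega
        have h1n : 1 ≤ n := le_trans hj hjn
        have : c j ≤ c n := ih hjn (by omega)
        exact this.trans (hc_mono n h1n (by omega))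
  have hc_nonneg : ∀ j, 1 ≤ j → j ≤ s + 1 → 0 ≤ c j := by
    intro j hj hjs
    rw [← hc1]; exact hc_mono' 1 j le_rfl hj hjs
  have hτ0 : 0 ≤ Δt / r := div_nonneg hΔt_nonneg hr.le
  have hτ1 : Δt / r ≤ hFE := by rw [div_le_iff₀ hr]; linarith
  have hEuler : ∀ u : E, f (u + (Δt / r) • N u) ≤ f u := fun u => hN u _ hτ0 hτ1
  have key : ∀ i, 1 ≤ i → i ≤ s + 1 → f (y i) ≤ M := by
    intro i
    induction i using Nat.strong_induction_on with
    | _ i ih =>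
      intro hi1 his
      rcases Nat.eq_or_lt_of_le hi1 with h | h
      · rw [← h, hy1]; exact le_max_right _ _
      · have hi2 : 2 ≤ i := h
        rw [hy i hi2 his]
        refine convex_combo_three_add' f hf_conv _ _ _ _ _ _ _ _ _
          (hv1 i hi2 his) (hv2 i hi2 his) (hαhat i hi2 his)
          (fun j hj => by
            rw [Finset.mem_Icc] at hj
            exact hα i j hi2 his hj.1 (by omega))
          (hconsistency i hi2 his) M ?_ (le_max_right _ _) ?_ ?_
        · exact le_trans
            (hL _ (mul_nonneg (by linarith [hc_nonneg i (by omega) his]) hΔt_nonneg) uprev)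
            (le_max_left _ _)
        · exact le_trans (le_trans
            (hL _ (mul_nonneg (by linarith [hc_nonneg i (by omega) his]) hΔt_nonneg) _)
            (hEuler uprev)) (le_max_left _ _)
        · intro j hj
          rw [Finset.mem_Icc] at hj
          have hji : j < i := by omega
          have hcj : c j ≤ c i := hc_mono' j i hj.1 hji.le his
          refine le_trans (hL _ (mul_nonneg (by linarith) hΔt_nonneg) _) ?_
          exact le_trans (hEuler (y j)) (ih j hji hj.1 (by omega))
  exact key (s + 1) (by omega) le_rfl
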